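/- Define g(t) = t - Σ_{i=1}^n 2a_i² / (1 + √(1 + 4a_i² γ(t))) for t ∈ (0,1), where γ(t) = 2β(t) + t β(t)² and β(t) = (1-√(1-t))/(t√(1-t)), and a_1,…,a_n are nonzero reals. Then lim_{t→0^+} g(t) = -(1/2) Σ_{i=1}^n (√(1+4a_i²) - 1) < 0 and lim_{t→1^-} g(t) = 1 > 0; consequently (by continuity) there exists t* ∈ (0,1) with g(t*) = 0. -/

import Mathlib

open Filter

private lemma sqrt_tendsto_atTop : Tendsto Real.sqrt atTop atTop := by
  apply tendsto_atTop_atTop.mpr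
  intro b
  refine ⟨(max b 0) ^ 2, fun x hx => ?_⟩
  have hx0 : (0:ℝ) ≤ x := le_trans (by positivity) hx
  have h1 : max b 0 ≤ Real.sqrt x := (Real.le_sqrt (le_max_right b 0) hx0).mpr hx
  exact le_trans (le_max_left b 0) h1

private lemma key_alg (a : ℝ) :
    2 * a ^ 2 / (1 + Real.sqrt (1 + 4 * a ^ 2)) = (Real.sqrt (1 + 4 * a ^ 2) - 1) / 2 := by
  have h0 : (0:ℝ) ≤ 1 + 4 * a ^ 2 := by positivity
  have hs := Real.sq_sqrt h0
  have hpos : (0:ℝ) < 1 + Real.sqrt (1 + 4 * a ^ 2) := by positivity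
  rw [div_eq_div_iff (ne_of_gt hpos) (two_ne_zero)]
  nlinarith [hs]

set_option maxHeartbeats 1000000 in
theorem stmt_18 (n : ℕ) (hn : 0 < n) (a : Fin n → ℝ) (ha : ∀ i, a i ≠ 0) :
    let β : ℝ → ℝ := fun t => (1 - Real.sqrt (1 - t)) / (t * Real.sqrt (1 - t))
    let γ : ℝ → ℝ := fun t => 2 * β t + t * (β t) ^ 2
    let g : ℝ → ℝ := fun t =>
      t - ∑ i : Fin n, 2 * (a i) ^ 2 / (1 + Real.sqrt (1 + 4 * (a i) ^ 2 * γ t))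
    Tendsto g (nhdsWithin 0 (Set.Ioi 0))
        (nhds (-(1 / 2) * ∑ i : Fin n, (Real.sqrt (1 + 4 * (a i) ^ 2) - 1))) ∧
      -(1 / 2) * (∑ i : Fin n, (Real.sqrt (1 + 4 * (a i) ^ 2) - 1)) < 0 ∧
      Tendsto g (nhdsWithin 1 (Set.Iio 1)) (nhds 1) ∧
      ∃ ts ∈ Set.Ioo (0 : ℝ) 1, g ts = 0 := by
  intro β γ g
  have hIoo0 : Set.Ioo (0:ℝ) 1 ∈ nhdsWithin (0:ℝ) (Set.Ioi 0) :=
    Ioo_mem_nhdsGT_of_mem ⟨le_refl 0, one_pos⟩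
  have hIoo1 : Set.Ioo (0:ℝ) 1 ∈ nhdsWithin (1:ℝ) (Set.Iio 1) :=
    Ioo_mem_nhdsLT_of_mem ⟨one_pos, le_refl 1⟩
  -- limit of β at 0⁺
  have hβ0 : Tendsto β (nhdsWithin 0 (Set.Ioi 0)) (nhds (1/2)) := by
    have hcont : Tendsto (fun t : ℝ => 1 / ((1 + Real.sqrt (1 - t)) * Real.sqrt (1 - t)))
        (nhdsWithin 0 (Set.Ioi 0)) (nhds (1/2)) := by
      have : ContinuousAt (fun t : ℝ => 1 / ((1 + Real.sqrt (1 - t)) * Real.sqrt (1 - t))) 0 := by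
        apply ContinuousAt.div continuousAt_const
        · fun_prop
        · norm_num [Real.sqrt_one]
      have h : Tendsto (fun t : ℝ => 1 / ((1 + Real.sqrt (1 - t)) * Real.sqrt (1 - t)))
          (nhdsWithin 0 (Set.Ioi 0)) (nhds (1 / ((1 + Real.sqrt (1 - 0)) * Real.sqrt (1 - 0)))) :=
        this.tendsto.mono_left nhdsWithin_le_nhds
      have hv : 1 / ((1 + Real.sqrt (1 - (0:ℝ))) * Real.sqrt (1 - 0)) = 1/2 := by
        norm_num [Real.sqrt_one]
      rwa [hv] at h
    apply hcont.congr'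
    filter_upwards [hIoo0] with t ht
    obtain ⟨ht0, ht1⟩ := ht
    have h1t : (0:ℝ) < 1 - t := by linarith
    have hs0 : 0 < Real.sqrt (1 - t) := Real.sqrt_pos.mpr h1t
    have hs : Real.sqrt (1 - t) ^ 2 = 1 - t := Real.sq_sqrt (le_of_lt h1t)
    show 1 / ((1 + Real.sqrt (1 - t)) * Real.sqrt (1 - t)) = β t
    show _ = (1 - Real.sqrt (1 - t)) / (t * Real.sqrt (1 - t))
    rw [div_eq_div_iff (ne_of_gt (mul_pos (by positivity) hs0)) (ne_of_gt (mul_pos ht0 hs0))]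
    nlinarith [hs]
  -- limit of γ at 0⁺
  have hid0 : Tendsto (fun t : ℝ => t) (nhdsWithin 0 (Set.Ioi 0)) (nhds 0) :=
    Tendsto.mono_left (f := fun t : ℝ => t) tendsto_id nhdsWithin_le_nhds
  have hγ0 : Tendsto γ (nhdsWithin 0 (Set.Ioi 0)) (nhds 1) := by
    have h : Tendsto (fun t : ℝ => 2 * β t + t * β t ^ 2) (nhdsWithin 0 (Set.Ioi 0))
        (nhds (2 * (1/2) + 0 * (1/2)^2)) :=
      (Tendsto.mul tendsto_const_nhds hβ0).add (hid0.mul (hβ0.pow 2))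
    have heq : (2:ℝ) * (1/2) + 0 * (1/2)^2 = 1 := by norm_num
    rw [heq] at h
    exact h
  -- limit of g at 0⁺
  have hsum0 : Tendsto (fun t => ∑ i : Fin n, 2 * (a i) ^ 2 / (1 + Real.sqrt (1 + 4 * (a i) ^ 2 * γ t)))
      (nhdsWithin 0 (Set.Ioi 0))
      (nhds (∑ i : Fin n, 2 * (a i) ^ 2 / (1 + Real.sqrt (1 + 4 * (a i) ^ 2 * 1)))) := by
    apply tendsto_finset_sum
    intro i _
    apply Tendsto.div tendsto_const_nhds
    · apply tendsto_const_nhds.add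
      exact (Real.continuous_sqrt.continuousAt.tendsto).comp
        (tendsto_const_nhds.add (tendsto_const_nhds.mul hγ0))
    · have : (0:ℝ) < 1 + Real.sqrt (1 + 4 * (a i) ^ 2 * 1) := by positivity
      exact ne_of_gt this
  have hG0 : Tendsto g (nhdsWithin 0 (Set.Ioi 0))
      (nhds (-(1 / 2) * ∑ i : Fin n, (Real.sqrt (1 + 4 * (a i) ^ 2) - 1))) := by
    have h := hid0.sub hsum0
    have heq : (0:ℝ) - (∑ i : Fin n, 2 * (a i) ^ 2 / (1 + Real.sqrt (1 + 4 * (a i) ^ 2 * 1)))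
        = -(1 / 2) * ∑ i : Fin n, (Real.sqrt (1 + 4 * (a i) ^ 2) - 1) := by
      rw [zero_sub, Finset.mul_sum, ← Finset.sum_neg_distrib]
      apply Finset.sum_congr rfl
      intro i _
      rw [mul_one, key_alg (a i)]
      ring
    rwa [heq] at h
  -- negativity
  have hsum_pos : 0 < ∑ i : Fin n, (Real.sqrt (1 + 4 * (a i) ^ 2) - 1) := by
    apply Finset.sum_pos
    · intro i _
      have hai : 0 < (a i) ^ 2 := by
        have h := pow_pos (abs_pos.mpr (ha i)) 2
        rwa [sq_abs] at h
      have h1 : (1:ℝ) < Real.sqrt (1 + 4 * (a i) ^ 2) :=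
        (Real.lt_sqrt zero_le_one).mpr (by nlinarith)
      linarith
    · exact Finset.univ_nonempty_iff.mpr (Fin.pos_iff_nonempty.mp hn)
  have hneg : -(1 / 2) * (∑ i : Fin n, (Real.sqrt (1 + 4 * (a i) ^ 2) - 1)) < 0 := by
    nlinarith [hsum_pos]
  -- limit of β at 1⁻
  have hsqrt1 : Tendsto (fun t : ℝ => Real.sqrt (1 - t)) (nhdsWithin 1 (Set.Iio 1)) (nhds 0) := by
    have hc : ContinuousAt (fun t : ℝ => Real.sqrt (1 - t)) 1 := by fun_prop
    have h : Tendsto (fun t : ℝ => Real.sqrt (1 - t)) (nhdsWithin 1 (Set.Iio 1))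
        (nhds (Real.sqrt (1 - 1))) := hc.tendsto.mono_left nhdsWithin_le_nhds
    simpa using h
  have hden1 : Tendsto (fun t : ℝ => t * Real.sqrt (1 - t)) (nhdsWithin 1 (Set.Iio 1))
      (nhdsWithin 0 (Set.Ioi 0)) := by
    rw [tendsto_nhdsWithin_iff]
    constructor
    · have hid1 : Tendsto (fun t : ℝ => t) (nhdsWithin 1 (Set.Iio 1)) (nhds 1) :=
        Tendsto.mono_left (f := fun t : ℝ => t) tendsto_id nhdsWithin_le_nhds
      have h := hid1.mul hsqrt1
      simpa using h
    · filter_upwards [hIoo1] with t ht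
      have hs0 : 0 < Real.sqrt (1 - t) := Real.sqrt_pos.mpr (by linarith [ht.2])
      exact mul_pos ht.1 hs0
  have hβ1 : Tendsto β (nhdsWithin 1 (Set.Iio 1)) atTop := by
    have hnum : Tendsto (fun t : ℝ => 1 - Real.sqrt (1 - t)) (nhdsWithin 1 (Set.Iio 1)) (nhds 1) := by
      have h : Tendsto (fun t : ℝ => 1 - Real.sqrt (1 - t)) (nhdsWithin 1 (Set.Iio 1))
          (nhds (1 - 0)) := Tendsto.sub tendsto_const_nhds hsqrt1
      simpa using h
    have hinv : Tendsto (fun t : ℝ => (t * Real.sqrt (1 - t))⁻¹) (nhdsWithin 1 (Set.Iio 1)) atTop :=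
      tendsto_inv_nhdsGT_zero.comp hden1
    have h := Tendsto.pos_mul_atTop one_pos hnum hinv
    apply h.congr
    intro t
    show _ = (1 - Real.sqrt (1 - t)) / (t * Real.sqrt (1 - t))
    rw [div_eq_mul_inv]
  -- limit of γ at 1⁻
  have hγ1 : Tendsto γ (nhdsWithin 1 (Set.Iio 1)) atTop := by
    have h2 : Tendsto (fun t : ℝ => 2 * β t + t * β t ^ 2) (nhdsWithin 1 (Set.Iio 1)) atTop := by
      refine tendsto_atTop_mono' _ ?_ (Tendsto.const_mul_atTop two_pos hβ1)
      filter_upwards [hIoo1] with t ht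
      exact le_add_of_nonneg_right (mul_nonneg (le_of_lt ht.1) (sq_nonneg _))
    exact h2
  -- limit of g at 1⁻
  have hsum1 : Tendsto (fun t => ∑ i : Fin n, 2 * (a i) ^ 2 / (1 + Real.sqrt (1 + 4 * (a i) ^ 2 * γ t)))
      (nhdsWithin 1 (Set.Iio 1)) (nhds 0) := by
    have h : Tendsto (fun t => ∑ i : Fin n, 2 * (a i) ^ 2 / (1 + Real.sqrt (1 + 4 * (a i) ^ 2 * γ t)))
        (nhdsWithin 1 (Set.Iio 1)) (nhds (∑ _i : Fin n, (0:ℝ))) := by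
      apply tendsto_finset_sum
      intro i _
      apply Tendsto.div_atTop tendsto_const_nhds
      apply tendsto_atTop_add_const_left
      apply sqrt_tendsto_atTop.comp
      apply tendsto_atTop_add_const_left
      have hpos : (0:ℝ) < 4 * (a i) ^ 2 := by
        have := ha i; positivity
      exact Tendsto.const_mul_atTop hpos hγ1
    simpa using h
  have hG1 : Tendsto g (nhdsWithin 1 (Set.Iio 1)) (nhds 1) := by
    have hid1 : Tendsto (fun t : ℝ => t) (nhdsWithin 1 (Set.Iio 1)) (nhds 1) :=
      Tendsto.mono_left (f := fun t : ℝ => t) tendsto_id nhdsWithin_le_nhds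
    have h := hid1.sub hsum1
    simpa using h
  -- continuity of g on Ioo 0 1
  have hgcont : ContinuousOn g (Set.Ioo 0 1) := by
    have hβc : ContinuousOn β (Set.Ioo 0 1) := by
      apply ContinuousOn.div
      · fun_prop
      · fun_prop
      · intro t ht
        have hs0 : 0 < Real.sqrt (1 - t) := Real.sqrt_pos.mpr (by linarith [ht.2])
        have ht0 := ht.1
        positivity
    have hγc : ContinuousOn γ (Set.Ioo 0 1) :=
      (continuousOn_const.mul hβc).add (continuousOn_id.mul (hβc.pow 2))
    apply ContinuousOn.sub continuousOn_id
    apply continuousOn_finset_sum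
    intro i _
    apply ContinuousOn.div continuousOn_const
    · exact continuousOn_const.add
        (Real.continuous_sqrt.comp_continuousOn (continuousOn_const.add (continuousOn_const.mul hγc)))
    · intro t ht
      have h := Real.sqrt_nonneg (1 + 4 * (a i) ^ 2 * γ t)
      positivity
  -- existence of zero
  refine ⟨hG0, hneg, hG1, ?_⟩
  have hev1 : ∀ᶠ t in nhdsWithin 1 (Set.Iio 1), (0:ℝ) < g t ∧ t ∈ Set.Ioo (0:ℝ) 1 := by
    filter_upwards [hG1.eventually (eventually_gt_nhds one_pos), hIoo1] with t h1 h2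
    exact ⟨h1, h2⟩
  obtain ⟨t₁, hgt₁, ht₁⟩ := hev1.exists
  have hev0 : ∀ᶠ t in nhdsWithin 0 (Set.Ioi 0), g t < 0 ∧ t ∈ Set.Ioo (0:ℝ) t₁ := by
    have hIoo0' : Set.Ioo (0:ℝ) t₁ ∈ nhdsWithin (0:ℝ) (Set.Ioi 0) :=
      Ioo_mem_nhdsGT_of_mem ⟨le_refl 0, ht₁.1⟩
    filter_upwards [hG0.eventually (eventually_lt_nhds hneg), hIoo0'] with t h1 h2
    exact ⟨h1, h2⟩
  obtain ⟨t₀, hgt₀, ht₀⟩ := hev0.exists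
  have hsub : Set.Icc t₀ t₁ ⊆ Set.Ioo (0:ℝ) 1 := fun x hx =>
    ⟨lt_of_lt_of_le ht₀.1 hx.1, lt_of_le_of_lt hx.2 ht₁.2⟩
  have hivt := intermediate_value_Icc (le_of_lt ht₀.2) (hgcont.mono hsub)
  have h0mem : (0:ℝ) ∈ Set.Icc (g t₀) (g t₁) := ⟨le_of_lt hgt₀, le_of_lt hgt₁⟩
  obtain ⟨ts, hts, hgts⟩ := hivt h0mem
  exact ⟨ts, hsub hts, hgts⟩
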